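/- Let 𝔰, 𝔟 be positive integers with 𝔟 ≤ 𝔰 − 1 and 2𝔟 − 𝔰 = 1, and let γ ∈ (0,1). Then the double sum ∑_{n,m ∈ ℕ} 2^{(n+m)(𝔟−𝔰)} · (max(ε, 2^{-n}, 2^{-m}))^{-𝔰} · max(2^{nγ}, 2^{mγ}) is bounded by C·ε^{-1-γ} for all ε ∈ (0,1], with C depending only on 𝔰, 𝔟, γ. -/

import Mathlib

open Real

lemma geom_min_summable (α β : ℝ) (hα : 0 ≤ α) (hβ : 0 < β) (T : ℕ) :
    Summable (fun n : ℕ => (2:ℝ) ^ (α * min (n:ℝ) T - β * n)) := by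
  refine Summable.of_nonneg_of_le (f := fun n : ℕ => (2:ℝ)^(α * T) * ((2:ℝ)^(-β))^n)
    (fun n => Real.rpow_nonneg (by norm_num : (0:ℝ) ≤ 2) _) (fun n => ?_) ?_
  · show (2:ℝ) ^ (α * min (n:ℝ) T - β * n) ≤ (2:ℝ)^(α * T) * ((2:ℝ)^(-β))^n
    rw [← Real.rpow_natCast ((2:ℝ)^(-β)) n, ← Real.rpow_mul (by norm_num),
      ← Real.rpow_add (by norm_num)]
    apply Real.rpow_le_rpow_of_exponent_le (by norm_num)
    have : min (n:ℝ) T ≤ T := min_le_right _ _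
    nlinarith [hβ.le, hα]
  · exact (summable_geometric_of_lt_one (Real.rpow_nonneg (by norm_num) _)
      (Real.rpow_lt_one_of_one_lt_of_neg (by norm_num) (by linarith))).mul_left _

lemma geom_min_tsum (α β : ℝ) (hβ : 0 < β) (hαβ : β < α) (T : ℕ) :
    ∑' n : ℕ, (2:ℝ) ^ (α * min (n:ℝ) T - β * n) ≤
      ((2:ℝ)^(α-β)/((2:ℝ)^(α-β)-1) + (2:ℝ)^(-β)/(1-(2:ℝ)^(-β))) * (2:ℝ)^((α-β)*T) := by
  set f : ℕ → ℝ := fun n => (2:ℝ) ^ (α * min (n:ℝ) T - β * n) with hf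
  have hsum := geom_min_summable α β (by linarith) hβ T
  rw [← hsum.sum_add_tsum_nat_add (T+1)]
  set r : ℝ := (2:ℝ)^(α-β) with hr
  have hr1 : 1 < r := Real.one_lt_rpow_iff_of_pos (by norm_num) |>.2 (Or.inl ⟨by norm_num, by linarith⟩)
  have hq1 : (2:ℝ)^(-β) < 1 := Real.rpow_lt_one_of_one_lt_of_neg (by norm_num) (by linarith)
  have hq0 : (0:ℝ) ≤ (2:ℝ)^(-β) := Real.rpow_nonneg (by norm_num) _
  have head : ∑ i ∈ Finset.range (T+1), f i ≤ r/(r-1) * (2:ℝ)^((α-β)*T) := by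
    have : ∀ i ∈ Finset.range (T+1), f i = r^i := by
      intro i hi
      simp only [Finset.mem_range] at hi
      have hiT : (i:ℝ) ≤ T := by exact_mod_cast Nat.lt_succ_iff.1 hi
      rw [hf, hr]
      simp only [min_eq_left hiT]
      rw [← Real.rpow_natCast ((2:ℝ)^(α-β)) i, ← Real.rpow_mul (by norm_num)]
      congr 1; ring
    rw [Finset.sum_congr rfl this, geom_sum_eq (ne_of_gt hr1)]
    have hX : r^(T+1) = r * (2:ℝ)^((α-β)*T) := by
      rw [hr, ← Real.rpow_natCast ((2:ℝ)^(α-β)) (T+1), ← Real.rpow_mul (by norm_num),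
        ← Real.rpow_add (by norm_num)]
      congr 1; push_cast; ring
    rw [div_mul_eq_mul_div, ← hX]
    gcongr
    · linarith
  have tail : ∑' i : ℕ, f (i + (T+1)) ≤ (2:ℝ)^(-β)/(1-(2:ℝ)^(-β)) * (2:ℝ)^((α-β)*T) := by
    have heq : ∀ i : ℕ, f (i + (T+1)) = ((2:ℝ)^((α-β)*T) * (2:ℝ)^(-β)) * ((2:ℝ)^(-β))^i := by
      intro i
      rw [hf]
      have h1 : min ((i + (T+1) : ℕ) : ℝ) (T:ℝ) = T := by
        apply min_eq_right; push_cast; linarith [Nat.cast_nonneg (α := ℝ) i]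
      simp only [h1]
      rw [← Real.rpow_natCast ((2:ℝ)^(-β)) i, ← Real.rpow_mul (by norm_num),
        ← Real.rpow_add (by norm_num), ← Real.rpow_add (by norm_num)]
      congr 1; push_cast; ring
    rw [tsum_congr heq, tsum_mul_left, tsum_geometric_of_lt_one hq0 hq1]
    rw [div_mul_eq_mul_div, div_eq_mul_inv]
    ring_nf
    apply le_of_eq; ring
  calc ∑ i ∈ Finset.range (T+1), f i + ∑' i : ℕ, f (i + (T+1))
      ≤ r/(r-1) * (2:ℝ)^((α-β)*T) + (2:ℝ)^(-β)/(1-(2:ℝ)^(-β)) * (2:ℝ)^((α-β)*T) :=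
        add_le_add head tail
    _ = ((2:ℝ)^(α-β)/((2:ℝ)^(α-β)-1) + (2:ℝ)^(-β)/(1-(2:ℝ)^(-β))) * (2:ℝ)^((α-β)*T) := by
        rw [hr]; ring

set_option maxHeartbeats 1000000 in

/-- The key dyadic double-sum estimate: for positive integers `𝔰, 𝔟` with
`𝔟 ≤ 𝔰 - 1` and `2𝔟 - 𝔰 = 1`, and `γ ∈ (0,1)`,
`∑_{n,m} 2^{(n+m)(𝔟-𝔰)} (max(ε, 2^{-n}, 2^{-m}))^{-𝔰} max(2^{nγ}, 2^{mγ}) ≤ C ε^{-1-γ}`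
for all `ε ∈ (0,1]`. -/
theorem dyadic_double_sum (s b : ℕ) (hs : 0 < s) (hb0 : 0 < b)
    (hb : b + 1 ≤ s) (hsb : 2 * b = s + 1) (γ : ℝ) (hγ : γ ∈ Set.Ioo (0 : ℝ) 1) :
    ∃ C : ℝ, 0 < C ∧ ∀ ε ∈ Set.Ioc (0 : ℝ) 1,
      (∑' p : ℕ × ℕ,
        (2 : ℝ) ^ (((p.1 : ℝ) + (p.2 : ℝ)) * ((b : ℝ) - (s : ℝ))) *
          (max ε (max ((2 : ℝ) ^ (-(p.1 : ℝ))) ((2 : ℝ) ^ (-(p.2 : ℝ))))) ^ (-(s : ℝ)) *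
          max ((2 : ℝ) ^ ((p.1 : ℝ) * γ)) ((2 : ℝ) ^ ((p.2 : ℝ) * γ)))
        ≤ C * ε ^ (-1 - γ) := by
  obtain ⟨hγ0, hγ1⟩ := hγ
  set δ : ℝ := (b:ℝ) - 1 with hδ
  have hb2 : 2 ≤ b := by omega
  have hδ1 : (1:ℝ) ≤ δ := by
    have : (2:ℝ) ≤ b := by exact_mod_cast hb2
    simp [hδ]; linarith
  have hs2 : (s:ℝ) = 2*δ + 1 := by
    have : (2:ℝ) * b = s + 1 := by exact_mod_cast hsb
    simp [hδ]; linarith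
  have hbs : (b:ℝ) - (s:ℝ) = -δ := by rw [hs2, hδ]; ring
  have hδγ : 0 < δ - γ := by linarith
  -- the constants
  set Cu : ℝ := (2:ℝ)^((1:ℝ)/2)/((2:ℝ)^((1:ℝ)/2)-1) + (2:ℝ)^(-δ)/(1-(2:ℝ)^(-δ)) with hCu
  set Cv : ℝ := (2:ℝ)^((1:ℝ)/2+γ)/((2:ℝ)^((1:ℝ)/2+γ)-1)
      + (2:ℝ)^(-(δ-γ))/(1-(2:ℝ)^(-(δ-γ))) with hCv
  have h2half : 1 < (2:ℝ)^((1:ℝ)/2) :=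
    Real.one_lt_rpow_iff_of_pos (by norm_num) |>.2 (Or.inl ⟨by norm_num, by norm_num⟩)
  have h2halfγ : 1 < (2:ℝ)^((1:ℝ)/2+γ) :=
    Real.one_lt_rpow_iff_of_pos (by norm_num) |>.2 (Or.inl ⟨by norm_num, by linarith⟩)
  have hδlt : (2:ℝ)^(-δ) < 1 := Real.rpow_lt_one_of_one_lt_of_neg (by norm_num) (by linarith)
  have hδγlt : (2:ℝ)^(-(δ-γ)) < 1 := Real.rpow_lt_one_of_one_lt_of_neg (by norm_num) (by linarith)
  have hCu0 : 0 < Cu := by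
    have h1 : 0 < (2:ℝ)^((1:ℝ)/2)/((2:ℝ)^((1:ℝ)/2)-1) := div_pos (by positivity) (by linarith)
    have h2 : 0 < (2:ℝ)^(-δ)/(1-(2:ℝ)^(-δ)) := div_pos (by positivity) (by linarith)
    rw [hCu]; linarith
  have hCv0 : 0 < Cv := by
    have h1 : 0 < (2:ℝ)^((1:ℝ)/2+γ)/((2:ℝ)^((1:ℝ)/2+γ)-1) := div_pos (by positivity) (by linarith)
    have h2 : 0 < (2:ℝ)^(-(δ-γ))/(1-(2:ℝ)^(-(δ-γ))) := div_pos (by positivity) (by linarith)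
    rw [hCv]; linarith
  refine ⟨2 * (2:ℝ)^(1+γ) * (Cu * Cv), by positivity, ?_⟩
  rintro ε ⟨hε0, hε1⟩
  -- dyadic scale K
  have hinv1 : (1:ℝ) ≤ ε⁻¹ := one_le_inv_iff₀.2 ⟨hε0, hε1⟩
  set K : ℕ := Nat.log 2 ⌊ε⁻¹⌋₊ with hKdef
  have hfl1 : 1 ≤ ⌊ε⁻¹⌋₊ := Nat.le_floor (by exact_mod_cast hinv1)
  have hK1 : (2:ℝ)^(K:ℝ) ≤ ε⁻¹ := by
    rw [Real.rpow_natCast]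
    have h' : ((2:ℝ))^K ≤ ((⌊ε⁻¹⌋₊:ℝ)) := by exact_mod_cast Nat.pow_log_le_self 2 (by omega)
    exact h'.trans (Nat.floor_le (by positivity))
  have hK2 : ε⁻¹ < (2:ℝ)^((K:ℝ)+1) := by
    have h1 : ε⁻¹ < (⌊ε⁻¹⌋₊ : ℝ) + 1 := Nat.lt_floor_add_one _
    have h2 : ⌊ε⁻¹⌋₊ + 1 ≤ 2^(K+1) := Nat.lt_pow_succ_log_self (by norm_num) _
    have h3 : ((⌊ε⁻¹⌋₊ : ℝ) + 1) ≤ ((2:ℝ))^((K+1 : ℕ):ℝ) := by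
      rw [Real.rpow_natCast]
      exact_mod_cast h2
    calc ε⁻¹ < (⌊ε⁻¹⌋₊ : ℝ) + 1 := h1
      _ ≤ (2:ℝ)^((K+1:ℕ):ℝ) := h3
      _ = (2:ℝ)^((K:ℝ)+1) := by push_cast; ring_nf
  have hεlow : (2:ℝ)^(-((K:ℝ)+1)) ≤ ε := by
    rw [Real.rpow_neg (by norm_num)]
    have h := (inv_lt_inv₀ (Real.rpow_pos_of_pos (by norm_num) ((K:ℝ)+1)) (inv_pos.2 hε0)).2 hK2
    rw [inv_inv] at h
    exact h.le
  have hεK : ε ≤ (2:ℝ)^(-(K:ℝ)) := by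
    rw [Real.rpow_neg (by norm_num)]
    have h := (inv_le_inv₀ (inv_pos.2 hε0) (Real.rpow_pos_of_pos (by norm_num) (K:ℝ))).2 hK1
    rw [inv_inv] at h
    exact h
  set T : ℕ := K + 1 with hT
  set u : ℕ → ℝ := fun n => (2:ℝ)^((s:ℝ)/2 * min (n:ℝ) T - δ * n) with hu
  set v : ℕ → ℝ := fun n => (2:ℝ)^((s:ℝ)/2 * min (n:ℝ) T - (δ-γ) * n) with hv
  have hs0 : (0:ℝ) ≤ (s:ℝ)/2 := by positivity
  have hβu : δ < (s:ℝ)/2 := by rw [hs2]; linarith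
  have hβv : δ - γ < (s:ℝ)/2 := by rw [hs2]; linarith
  have hu_sum : Summable u := geom_min_summable _ _ hs0 (by linarith) T
  have hv_sum : Summable v := geom_min_summable _ _ hs0 hδγ T
  have hu0 : ∀ n, 0 ≤ u n := fun n => Real.rpow_nonneg (by norm_num) _
  have hv0 : ∀ n, 0 ≤ v n := fun n => Real.rpow_nonneg (by norm_num) _
  have e1 : (s:ℝ)/2 - δ = 1/2 := by rw [hs2]; ring
  have e2 : (s:ℝ)/2 - (δ - γ) = 1/2 + γ := by rw [hs2]; ring
  have hu_bound : ∑' n, u n ≤ Cu * (2:ℝ)^(((1:ℝ)/2)*T) := by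
    have := geom_min_tsum ((s:ℝ)/2) δ (by linarith) hβu T
    rwa [e1] at this
  have hv_bound : ∑' n, v n ≤ Cv * (2:ℝ)^(((1:ℝ)/2+γ)*T) := by
    have := geom_min_tsum ((s:ℝ)/2) (δ-γ) hδγ hβv T
    rwa [e2] at this
  -- the summand and the pointwise bound
  set F : ℕ × ℕ → ℝ := fun p =>
      (2 : ℝ) ^ (((p.1 : ℝ) + (p.2 : ℝ)) * ((b : ℝ) - (s : ℝ))) *
        (max ε (max ((2 : ℝ) ^ (-(p.1 : ℝ))) ((2 : ℝ) ^ (-(p.2 : ℝ))))) ^ (-(s : ℝ)) *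
        max ((2 : ℝ) ^ ((p.1 : ℝ) * γ)) ((2 : ℝ) ^ ((p.2 : ℝ) * γ)) with hF
  have key : ∀ p : ℕ × ℕ, F p ≤ u p.2 * v p.1 + u p.1 * v p.2 := by
    rintro ⟨n, m⟩
    simp only [hF]
    set M : ℝ := max ε (max ((2:ℝ)^(-(n:ℝ))) ((2:ℝ)^(-(m:ℝ)))) with hM
    have hM0 : 0 < M := lt_of_lt_of_le hε0 (le_max_left _ _)
    set j : ℝ := min (min (n:ℝ) (m:ℝ)) ((T:ℕ):ℝ) with hj
    have hMlow : (2:ℝ)^(-j) ≤ M := by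
      rcases min_cases (min (n:ℝ) (m:ℝ)) ((T:ℕ):ℝ) with ⟨h, _⟩ | ⟨h, _⟩
      · rcases min_cases (n:ℝ) (m:ℝ) with ⟨h2, _⟩ | ⟨h2, _⟩
        · rw [hj, h, h2]; exact le_max_of_le_right (le_max_left _ _)
        · rw [hj, h, h2]; exact le_max_of_le_right (le_max_right _ _)
      · rw [hj, h]
        refine le_max_of_le_left ?_
        have : ((T:ℕ):ℝ) = (K:ℝ) + 1 := by rw [hT]; push_cast; ring
        rw [this]
        exact hεlow
    have hMs : M ^ (-(s:ℝ)) ≤ (2:ℝ)^(j * (s:ℝ)) := by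
      have h1 : M ^ (-(s:ℝ)) ≤ ((2:ℝ)^(-j)) ^ (-(s:ℝ)) :=
        Real.rpow_le_rpow_of_nonpos (Real.rpow_pos_of_pos (by norm_num) _) hMlow
          (by simp [Nat.cast_nonneg])
      calc M ^ (-(s:ℝ)) ≤ ((2:ℝ)^(-j)) ^ (-(s:ℝ)) := h1
        _ = (2:ℝ)^(j * (s:ℝ)) := by
            rw [← Real.rpow_mul (by norm_num)]
            congr 1; ring
    have hjn : j ≤ min (n:ℝ) ((T:ℕ):ℝ) :=
      le_min ((min_le_left _ _).trans (min_le_left _ _)) (min_le_right _ _)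
    have hjm : j ≤ min (m:ℝ) ((T:ℕ):ℝ) :=
      le_min ((min_le_left _ _).trans (min_le_right _ _)) (min_le_right _ _)
    have hMs2 : M ^ (-(s:ℝ)) ≤
        (2:ℝ)^((s:ℝ)/2 * min (n:ℝ) ((T:ℕ):ℝ) + (s:ℝ)/2 * min (m:ℝ) ((T:ℕ):ℝ)) := by
      refine hMs.trans (Real.rpow_le_rpow_of_exponent_le (by norm_num) ?_)
      nlinarith [hs0]
    have hmax : max ((2:ℝ)^((n:ℝ)*γ)) ((2:ℝ)^((m:ℝ)*γ)) ≤ (2:ℝ)^((n:ℝ)*γ) + (2:ℝ)^((m:ℝ)*γ) :=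
      max_le (le_add_of_nonneg_right (Real.rpow_nonneg (by norm_num) _))
        (le_add_of_nonneg_left (Real.rpow_nonneg (by norm_num) _))
    have hP : (2:ℝ) ^ (((n:ℝ) + (m:ℝ)) * ((b:ℝ) - (s:ℝ))) = (2:ℝ)^(-δ*((n:ℝ)+(m:ℝ))) := by
      rw [hbs]; congr 1; ring
    have step : (2:ℝ) ^ (((n:ℝ) + (m:ℝ)) * ((b:ℝ) - (s:ℝ))) * M ^ (-(s:ℝ)) *
        max ((2:ℝ)^((n:ℝ)*γ)) ((2:ℝ)^((m:ℝ)*γ)) ≤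
        (2:ℝ)^(-δ*((n:ℝ)+(m:ℝ))) *
          (2:ℝ)^((s:ℝ)/2 * min (n:ℝ) ((T:ℕ):ℝ) + (s:ℝ)/2 * min (m:ℝ) ((T:ℕ):ℝ)) *
          ((2:ℝ)^((n:ℝ)*γ) + (2:ℝ)^((m:ℝ)*γ)) := by
      rw [hP]
      have p0 : (0:ℝ) ≤ (2:ℝ)^(-δ*((n:ℝ)+(m:ℝ))) := Real.rpow_nonneg (by norm_num) _
      have m0 : (0:ℝ) ≤ M ^ (-(s:ℝ)) := Real.rpow_nonneg hM0.le _
      have x0 : (0:ℝ) ≤ max ((2:ℝ)^((n:ℝ)*γ)) ((2:ℝ)^((m:ℝ)*γ)) :=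
        le_max_of_le_left (Real.rpow_nonneg (by norm_num) _)
      apply mul_le_mul
      · exact mul_le_mul_of_nonneg_left hMs2 p0
      · exact hmax
      · exact x0
      · positivity
    refine step.trans (le_of_eq ?_)
    have comb : ∀ x y z : ℝ, (2:ℝ)^x * (2:ℝ)^y * (2:ℝ)^z = (2:ℝ)^(x+y+z) := by
      intro x y z
      rw [← Real.rpow_add (by norm_num : (0:ℝ) < 2), ← Real.rpow_add (by norm_num : (0:ℝ) < 2)]
    have huv2 : ∀ x y : ℝ, (2:ℝ)^x * (2:ℝ)^y = (2:ℝ)^(x+y) := fun x y =>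
      (Real.rpow_add (by norm_num) _ _).symm
    rw [mul_add, hu, hv]
    simp only []
    rw [comb, comb, huv2, huv2]
    congr 1
    · congr 1; ring
    · congr 1; ring
  have hF0 : ∀ p : ℕ × ℕ, 0 ≤ F p := by
    intro p
    simp only [hF]
    have : (0:ℝ) < max ε (max ((2:ℝ)^(-(p.1:ℝ))) ((2:ℝ)^(-(p.2:ℝ)))) :=
      lt_of_lt_of_le hε0 (le_max_left _ _)
    positivity
  have hG1 : Summable (fun p : ℕ × ℕ => u p.1 * v p.2) :=
    hu_sum.mul_of_nonneg hv_sum hu0 hv0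
  have hG2 : Summable (fun p : ℕ × ℕ => u p.2 * v p.1) :=
    ((hv_sum.mul_of_nonneg hu_sum hv0 hu0).congr (fun p => mul_comm _ _))
  have hG : Summable (fun p : ℕ × ℕ => u p.2 * v p.1 + u p.1 * v p.2) := hG2.add hG1
  have hFsum : Summable F := Summable.of_nonneg_of_le hF0 key hG
  have ht1 : ∑' p : ℕ × ℕ, u p.1 * v p.2 = (∑' n, u n) * (∑' n, v n) := by
    rw [Summable.tsum_prod' (f := fun p : ℕ × ℕ => u p.1 * v p.2) hG1 (fun n => hv_sum.mul_left (u n))]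
    simp_rw [tsum_mul_left, tsum_mul_right]
  have ht2 : ∑' p : ℕ × ℕ, u p.2 * v p.1 = (∑' n, u n) * (∑' n, v n) := by
    rw [Summable.tsum_prod' (f := fun p : ℕ × ℕ => u p.2 * v p.1) hG2 (fun b => hu_sum.mul_right (v b))]
    simp_rw [tsum_mul_right, tsum_mul_left]
  have hSu0 : 0 ≤ ∑' n, u n := tsum_nonneg hu0
  have hSv0 : 0 ≤ ∑' n, v n := tsum_nonneg hv0
  calc ∑' p : ℕ × ℕ, F p ≤ ∑' p : ℕ × ℕ, (u p.2 * v p.1 + u p.1 * v p.2) :=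
        Summable.tsum_le_tsum key hFsum hG
    _ = (∑' n, u n) * (∑' n, v n) + (∑' n, u n) * (∑' n, v n) := by
        rw [Summable.tsum_add hG2 hG1, ht2, ht1]
    _ = 2 * ((∑' n, u n) * (∑' n, v n)) := by ring
    _ ≤ 2 * ((Cu * (2:ℝ)^(((1:ℝ)/2)*T)) * (Cv * (2:ℝ)^(((1:ℝ)/2+γ)*T))) := by
        have h1 : (∑' n, u n) * (∑' n, v n) ≤
            (Cu * (2:ℝ)^(((1:ℝ)/2)*T)) * (Cv * (2:ℝ)^(((1:ℝ)/2+γ)*T)) :=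
          mul_le_mul hu_bound hv_bound hSv0 (by positivity)
        linarith
    _ = 2 * (Cu * Cv) * (2:ℝ)^((1+γ)*((T:ℕ):ℝ)) := by
        have hmul : (2:ℝ)^((1:ℝ)/2*((T:ℕ):ℝ)) * (2:ℝ)^(((1:ℝ)/2+γ)*((T:ℕ):ℝ))
            = (2:ℝ)^((1+γ)*((T:ℕ):ℝ)) := by
          rw [← Real.rpow_add (by norm_num)]; congr 1; ring
        rw [← hmul]; ring
    _ ≤ 2 * (2:ℝ)^(1+γ) * (Cu * Cv) * ε ^ (-1-γ) := by
        have hTc : ((T:ℕ):ℝ) = (K:ℝ) + 1 := by rw [hT]; push_cast; ring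
        have hsplit : (2:ℝ)^((1+γ)*((T:ℕ):ℝ)) = (2:ℝ)^(1+γ) * (2:ℝ)^((1+γ)*(K:ℝ)) := by
          rw [← Real.rpow_add (by norm_num), hTc]; congr 1; ring
        have hKε : (2:ℝ)^((1+γ)*(K:ℝ)) ≤ ε ^ (-1-γ) := by
          have h1 : ((2:ℝ)^(-(K:ℝ))) ^ (-1-γ) ≤ ε ^ (-1-γ) :=
            Real.rpow_le_rpow_of_nonpos hε0 hεK (by linarith)
          calc (2:ℝ)^((1+γ)*(K:ℝ)) = ((2:ℝ)^(-(K:ℝ))) ^ (-1-γ) := by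
                rw [← Real.rpow_mul (by norm_num)]; congr 1; ring
            _ ≤ ε ^ (-1-γ) := h1
        rw [hsplit]
        have hc : (0:ℝ) ≤ 2 * (Cu * Cv) * (2:ℝ)^(1+γ) := by positivity
        calc 2 * (Cu * Cv) * ((2:ℝ)^(1+γ) * (2:ℝ)^((1+γ)*(K:ℝ)))
            = 2 * (Cu * Cv) * (2:ℝ)^(1+γ) * (2:ℝ)^((1+γ)*(K:ℝ)) := by ring
          _ ≤ 2 * (Cu * Cv) * (2:ℝ)^(1+γ) * (ε ^ (-1-γ)) := by
              exact mul_le_mul_of_nonneg_left hKε hc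
          _ = 2 * (2:ℝ)^(1+γ) * (Cu * Cv) * ε ^ (-1-γ) := by ring
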